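/- Let L be a zpd Lie algebra and I an ideal of L such that L/I is centrally closed, i.e., every 2-cocycle on L/I with values in F is a coboundary. Then L/I is zpd. -/

import Mathlib

/-- The linear span of all brackets `⁅x, y⁆` in a Lie algebra `L` over `F`,
i.e. the derived subalgebra `[L, L]` viewed as a subspace. -/
def lieBracketSpan (F L : Type*) [Field F] [LieRing L] [LieAlgebra F L] : Submodule F L :=
  Submodule.span F {z : L | ∃ x y : L, ⁅x, y⁆ = z}

/-- A Lie algebra `L` over a field `F` is zero product determined (zpd) if every bilinear
map `f : L × L → F` vanishing on commuting pairs factors through the bracket via a linear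
map `Φ : [L, L] → F`. -/
def IsZPD (F L : Type*) [Field F] [LieRing L] [LieAlgebra F L] : Prop :=
  ∀ f : L →ₗ[F] L →ₗ[F] F, (∀ x y : L, ⁅x, y⁆ = 0 → f x y = 0) →
    ∃ Φ : lieBracketSpan F L →ₗ[F] F,
      ∀ x y : L, f x y = Φ ⟨⁅x, y⁆, Submodule.subset_span ⟨x, y, rfl⟩⟩

/-- A Lie algebra `M` over `F` is centrally closed if every `2`-cocycle
`f : M × M → F` (a skew-symmetric bilinear map satisfying the cocycle identity) is a
coboundary, i.e. of the form `f(x,y) = Φ(⁅x,y⁆)` for a linear map `Φ : [M,M] → F`. -/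
def IsCentrallyClosed (F M : Type*) [Field F] [LieRing M] [LieAlgebra F M] : Prop :=
  ∀ f : M →ₗ[F] M →ₗ[F] F,
    (∀ x y : M, f x y = - f y x) →
    (∀ x y z : M, f ⁅x, y⁆ z + f ⁅z, x⁆ y + f ⁅y, z⁆ x = 0) →
    ∃ Φ : lieBracketSpan F M →ₗ[F] F,
      ∀ x y : M, f x y = Φ ⟨⁅x, y⁆, Submodule.subset_span ⟨x, y, rfl⟩⟩

/-- if `L` is zpd and `I` is an ideal of `L` such that the quotient `L ⧸ I` is
centrally closed, then `L ⧸ I` is zpd. -/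
theorem isZPD_quotient_of_centrallyClosed (F L : Type*) [Field F] [LieRing L]
    [LieAlgebra F L] (hL : IsZPD F L) (I : LieIdeal F L)
    (hcc : IsCentrallyClosed F (L ⧸ I)) :
    IsZPD F (L ⧸ I) := by
  intro f hf
  set π : L →ₗ⁅F,L⁆ L ⧸ I := LieSubmodule.Quotient.mk' I with hπ
  have h1 : ∀ x y : L, (π ⁅x,y⁆ : L ⧸ I) = ⁅(π x : L ⧸ I), π y⁆ := fun x y =>
    (LieSubmodule.Quotient.mk_bracket (I := I) x y)
  have h2 : Function.Surjective π := LieSubmodule.Quotient.surjective_mk' I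
  -- pull back f to L
  let g : L →ₗ[F] L →ₗ[F] F := f.compl₁₂ π.toLinearMap π.toLinearMap
  have hg : ∀ x y : L, ⁅x, y⁆ = 0 → g x y = 0 := by
    intro x y h
    have : ⁅(π x : L ⧸ I), π y⁆ = 0 := by rw [← h1, h]; simp
    exact hf _ _ this
  obtain ⟨Ψ, hΨ⟩ := hL g hg
  have key : ∀ x y : L, f (π x) (π y) = Ψ ⟨⁅x, y⁆, Submodule.subset_span ⟨x, y, rfl⟩⟩ :=
    fun x y => hΨ x y
  have Ψadd : ∀ (a b : L) (ha : a ∈ lieBracketSpan F L) (hb : b ∈ lieBracketSpan F L),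
      Ψ ⟨a, ha⟩ + Ψ ⟨b, hb⟩ = Ψ ⟨a + b, Submodule.add_mem _ ha hb⟩ := by
    intro a b ha hb
    rw [← map_add]; rfl
  -- f is skew
  have hskew : ∀ u v : L ⧸ I, f u v = - f v u := by
    intro u v
    obtain ⟨x, rfl⟩ := h2 u
    obtain ⟨y, rfl⟩ := h2 v
    rw [key, key]
    have : (⟨⁅y, x⁆, Submodule.subset_span ⟨y, x, rfl⟩⟩ : lieBracketSpan F L)
        = -⟨⁅x, y⁆, Submodule.subset_span ⟨x, y, rfl⟩⟩ := by
      ext; simp [lie_skew]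
    rw [this, map_neg, neg_neg]
  have hcoc : ∀ u v w : L ⧸ I, f ⁅u, v⁆ w + f ⁅w, u⁆ v + f ⁅v, w⁆ u = 0 := by
    intro u v w
    obtain ⟨x, rfl⟩ := h2 u
    obtain ⟨y, rfl⟩ := h2 v
    obtain ⟨z, rfl⟩ := h2 w
    rw [← h1, ← h1, ← h1, key, key, key, ← map_add, ← map_add]
    have hsum : ⁅⁅x,y⁆,z⁆ + ⁅⁅z,x⁆,y⁆ + ⁅⁅y,z⁆,x⁆ = (0 : L) := by
      have hj := lie_jacobi x y z
      have h' : ⁅⁅x,y⁆,z⁆ + ⁅⁅z,x⁆,y⁆ + ⁅⁅y,z⁆,x⁆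
          = -(⁅x,⁅y,z⁆⁆ + ⁅y,⁅z,x⁆⁆ + ⁅z,⁅x,y⁆⁆) := by
        have e : ∀ a b : L, ⁅a, b⁆ = -⁅b, a⁆ := fun a b => by
          rw [lie_skew]
        rw [e ⁅x,y⁆ z, e ⁅z,x⁆ y, e ⁅y,z⁆ x]; abel
      rw [h', hj, neg_zero]
    convert map_zero Ψ using 2
    exact Subtype.ext hsum
  exact hcc f hskew hcoc
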